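/- Let S and A be finite nonempty sets and γ ∈ [0,1). Let R̄ : S × A → ℝ and, for each (s,a), P̄(·∣s,a) a probability distribution on S; for each σ > 0 let R_σ : S × A → ℝ and P_σ(·∣s,a) probability distributions on S, with R_σ(s,a) → R̄(s,a) and P_σ(s'∣s,a) → P̄(s'∣s,a) as σ → 0⁺ for every (s,a,s'). Let Q* : S × A → ℝ be the fixed point of the Bellman optimality operator T̄ of (R̄, P̄, γ), and for each σ > 0 let Q*_σ be the fixed point of the Bellman optimality operator T_σ of (R_σ, P_σ, γ). Then for every ε > 0 there exists σ' > 0 such that for all 0 < σ < σ', max_{(s,a)} |Q*(s,a) − Q*_σ(s,a)| < ε. -/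

import Mathlib

/-- If `|f a - g a| ≤ M` for all `a`, then the sup's differ by at most `M`. -/
lemma abs_sup'_sub_sup'_le_aux {α : Type*} [Fintype α] [Nonempty α]
    (f g : α → ℝ) (M : ℝ) (h : ∀ a, |f a - g a| ≤ M) :
    |Finset.univ.sup' Finset.univ_nonempty f - Finset.univ.sup' Finset.univ_nonempty g| ≤ M := by
  rw [abs_le]
  constructor
  · rw [neg_le, neg_sub]
    rw [sub_le_iff_le_add]
    apply Finset.sup'_le
    intro a _
    have h1 := Finset.le_sup' f (Finset.mem_univ a)
    have h2 := abs_le.1 (h a)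
    linarith [h2.1]
  · rw [sub_le_iff_le_add]
    apply Finset.sup'_le
    intro a _
    have h1 := Finset.le_sup' g (Finset.mem_univ a)
    have h2 := abs_le.1 (h a)
    linarith [h2.2]

/-- **Corollary 2.** As the noise scale vanishes, the optimal Q-function of the
NAMDP (the fixed point of its Bellman optimality operator) converges uniformly
to the optimal Q-function of the zero-noise-limit NAMDP. -/
theorem optimal_q_uniform_convergence
    {S A : Type*} [Fintype S] [Fintype A] [Nonempty S] [Nonempty A]
    (γ : ℝ) (hγ0 : 0 ≤ γ) (hγ1 : γ < 1)
    (Rbar : S → A → ℝ) (Pbar : S → A → S → ℝ)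
    (hPbar0 : ∀ s a s', 0 ≤ Pbar s a s') (hPbar1 : ∀ s a, ∑ s', Pbar s a s' = 1)
    (Rσ : ℝ → S → A → ℝ) (Pσ : ℝ → S → A → S → ℝ)
    (hPσ0 : ∀ σ > (0 : ℝ), ∀ s a s', 0 ≤ Pσ σ s a s')
    (hPσ1 : ∀ σ > (0 : ℝ), ∀ s a, ∑ s', Pσ σ s a s' = 1)
    (hR : ∀ s a, Filter.Tendsto (fun σ => Rσ σ s a)
      (nhdsWithin (0 : ℝ) (Set.Ioi 0)) (nhds (Rbar s a)))
    (hP : ∀ s a s', Filter.Tendsto (fun σ => Pσ σ s a s')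
      (nhdsWithin (0 : ℝ) (Set.Ioi 0)) (nhds (Pbar s a s')))
    (Qstar : S → A → ℝ)
    (hQstar : ∀ s a, Qstar s a = Rbar s a + γ * ∑ s', Pbar s a s' *
      Finset.univ.sup' Finset.univ_nonempty (Qstar s'))
    (Qσstar : ℝ → S → A → ℝ)
    (hQσstar : ∀ σ > (0 : ℝ), ∀ s a, Qσstar σ s a =
      Rσ σ s a + γ * ∑ s', Pσ σ s a s' *
        Finset.univ.sup' Finset.univ_nonempty (Qσstar σ s')) :
    ∀ ε > (0 : ℝ), ∃ σ' > (0 : ℝ), ∀ σ : ℝ, 0 < σ → σ < σ' →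
      (Finset.univ.sup' Finset.univ_nonempty fun p : S × A =>
        |Qstar p.1 p.2 - Qσstar σ p.1 p.2|) < ε := by
  intro ε hε
  -- value function of the limit MDP and a bound on it
  set V : S → ℝ := fun s' => Finset.univ.sup' Finset.univ_nonempty (Qstar s') with hV
  set C : ℝ := Finset.univ.sup' Finset.univ_nonempty (fun s' => |V s'|) with hCdef
  have hC : ∀ s', |V s'| ≤ C := fun s' =>
    Finset.le_sup' (fun s' => |V s'|) (Finset.mem_univ s')
  have hC0 : 0 ≤ C := le_trans (abs_nonneg _) (hC (Classical.arbitrary S))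
  have h1γ : 0 < 1 - γ := by linarith
  set n : ℕ := Fintype.card S with hn
  have hnpos : 0 < (n : ℝ) := by
    exact_mod_cast Fintype.card_pos
  set ε₁ : ℝ := (1 - γ) * ε / 3 with hε₁def
  set ε₂ : ℝ := (1 - γ) * ε / (3 * (γ * C + 1)) / n with hε₂def
  have hγC1 : 0 < γ * C + 1 := by nlinarith
  have hε₁ : 0 < ε₁ := by positivity
  have hε₂ : 0 < ε₂ := by positivity
  -- the eventual closeness of rewards and transitions
  have hevR : ∀ᶠ σ in nhdsWithin (0 : ℝ) (Set.Ioi 0),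
      ∀ s : S, ∀ a : A, |Rσ σ s a - Rbar s a| ≤ ε₁ := by
    rw [Filter.eventually_all]
    intro s
    rw [Filter.eventually_all]
    intro a
    have := (Metric.tendsto_nhds.mp (hR s a)) ε₁ hε₁
    filter_upwards [this] with σ hσ
    rw [Real.dist_eq] at hσ
    exact le_of_lt hσ
  have hevP : ∀ᶠ σ in nhdsWithin (0 : ℝ) (Set.Ioi 0),
      ∀ s : S, ∀ a : A, ∀ s' : S, |Pσ σ s a s' - Pbar s a s'| ≤ ε₂ := by
    rw [Filter.eventually_all]
    intro s
    rw [Filter.eventually_all]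
    intro a
    rw [Filter.eventually_all]
    intro s'
    have := (Metric.tendsto_nhds.mp (hP s a s')) ε₂ hε₂
    filter_upwards [this] with σ hσ
    rw [Real.dist_eq] at hσ
    exact le_of_lt hσ
  have hev := hevR.and hevP
  rw [eventually_nhdsWithin_iff, Metric.eventually_nhds_iff] at hev
  obtain ⟨δ, hδ0, hδ⟩ := hev
  refine ⟨δ, hδ0, ?_⟩
  intro σ hσ0 hσδ
  have hdist : dist σ (0 : ℝ) < δ := by
    rw [Real.dist_eq, sub_zero, abs_of_pos hσ0]; exact hσδ
  obtain ⟨hRc, hPc⟩ := hδ hdist hσ0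
  -- abbreviations for this σ
  set Vσ : S → ℝ := fun s' => Finset.univ.sup' Finset.univ_nonempty (Qσstar σ s') with hVσ
  set err : ℝ := Finset.univ.sup' Finset.univ_nonempty
      (fun p : S × A => |Qstar p.1 p.2 - Qσstar σ p.1 p.2|) with herrdef
  have herr0 : 0 ≤ err := by
    rw [herrdef]
    exact le_trans (abs_nonneg _)
      (Finset.le_sup' (fun p : S × A => |Qstar p.1 p.2 - Qσstar σ p.1 p.2|)
        (Finset.mem_univ (Classical.arbitrary (S × A))))
  have hVVσ : ∀ s', |V s' - Vσ s'| ≤ err := by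
    intro s'
    apply abs_sup'_sub_sup'_le_aux
    intro a
    exact Finset.le_sup' (fun p : S × A => |Qstar p.1 p.2 - Qσstar σ p.1 p.2|)
      (Finset.mem_univ (s', a))
  -- key contraction-style bound on err
  have hkey : err ≤ ε₁ + γ * ((n : ℝ) * ε₂ * C + err) := by
    apply Finset.sup'_le
    rintro ⟨s, a⟩ -
    have hsum : ∀ s', Pbar s a s' * V s' - Pσ σ s a s' * Vσ s' =
        (Pbar s a s' - Pσ σ s a s') * V s' + Pσ σ s a s' * (V s' - Vσ s') := by
      intro s'; ring
    have hterm : ∀ s', |Pbar s a s' * V s' - Pσ σ s a s' * Vσ s'| ≤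
        ε₂ * C + Pσ σ s a s' * err := by
      intro s'
      rw [hsum s']
      calc |(Pbar s a s' - Pσ σ s a s') * V s' + Pσ σ s a s' * (V s' - Vσ s')|
          ≤ |(Pbar s a s' - Pσ σ s a s') * V s'| + |Pσ σ s a s' * (V s' - Vσ s')| :=
            abs_add_le _ _
        _ = |Pbar s a s' - Pσ σ s a s'| * |V s'| + Pσ σ s a s' * |V s' - Vσ s'| := by
            rw [abs_mul, abs_mul, abs_of_nonneg (hPσ0 σ hσ0 s a s')]
        _ ≤ ε₂ * C + Pσ σ s a s' * err := by
            have h1 : |Pbar s a s' - Pσ σ s a s'| ≤ ε₂ := by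
              rw [abs_sub_comm]; exact hPc s a s'
            have := hC s'
            have := hVVσ s'
            have := hPσ0 σ hσ0 s a s'
            have := abs_nonneg (Pbar s a s' - Pσ σ s a s')
            have := abs_nonneg (V s' - Vσ s')
            have := abs_nonneg (V s')
            nlinarith
    have hsum2 : |∑ s', Pbar s a s' * V s' - ∑ s', Pσ σ s a s' * Vσ s'| ≤
        (n : ℝ) * ε₂ * C + err := by
      rw [← Finset.sum_sub_distrib]
      calc |∑ s', (Pbar s a s' * V s' - Pσ σ s a s' * Vσ s')|
          ≤ ∑ s', |Pbar s a s' * V s' - Pσ σ s a s' * Vσ s'| :=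
            Finset.abs_sum_le_sum_abs _ _
        _ ≤ ∑ s' : S, (ε₂ * C + Pσ σ s a s' * err) :=
            Finset.sum_le_sum (fun s' _ => hterm s')
        _ = (n : ℝ) * (ε₂ * C) + (∑ s' : S, Pσ σ s a s') * err := by
            rw [Finset.sum_add_distrib, Finset.sum_const, Finset.card_univ,
              nsmul_eq_mul, ← Finset.sum_mul]
        _ = (n : ℝ) * ε₂ * C + err := by rw [hPσ1 σ hσ0 s a]; ring
    calc |Qstar s a - Qσstar σ s a|
        = |(Rbar s a - Rσ σ s a) +
            γ * ((∑ s', Pbar s a s' * V s') - ∑ s', Pσ σ s a s' * Vσ s')| := by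
          rw [hQstar s a, hQσstar σ hσ0 s a]; ring_nf; rfl
      _ ≤ |Rbar s a - Rσ σ s a| +
            γ * |(∑ s', Pbar s a s' * V s') - ∑ s', Pσ σ s a s' * Vσ s'| := by
          refine le_trans (abs_add_le _ _) ?_
          rw [abs_mul, abs_of_nonneg hγ0]
      _ ≤ ε₁ + γ * ((n : ℝ) * ε₂ * C + err) := by
          have h1 : |Rbar s a - Rσ σ s a| ≤ ε₁ := by rw [abs_sub_comm]; exact hRc s a
          have h2 := hsum2
          nlinarith
  -- conclude
  have hnε₂ : (n : ℝ) * ε₂ = (1 - γ) * ε / (3 * (γ * C + 1)) := by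
    rw [hε₂def]; field_simp
  have hbound : γ * ((n : ℝ) * ε₂) * C ≤ (1 - γ) * ε / 3 := by
    rw [hnε₂]
    have heq : γ * ((1 - γ) * ε / (3 * (γ * C + 1))) * C
        = γ * C * ((1 - γ) * ε) / (3 * (γ * C + 1)) := by ring
    rw [heq, div_le_div_iff₀ (by positivity) (by norm_num : (0:ℝ) < 3)]
    have hγε : 0 ≤ (1 - γ) * ε := by positivity
    nlinarith [mul_nonneg (mul_nonneg hγ0 hC0) hγε]
  have : (1 - γ) * err ≤ (1 - γ) * ε / 3 + (1 - γ) * ε / 3 := by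
    have := hkey
    rw [hε₁def] at this
    nlinarith
  nlinarith
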